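/- arXiv:1701.02167 — 2 statements merged into one kernel-verified Lean document; each statement's English description precedes it below -/
import Mathlib

section
/- Let T > 0, let h : ℝ → ℝ be Lipschitz continuous, let α : [0,T] → ℝ be continuous, let y₀ ∈ ℝ, and let Θ : [0,T] → ℝ be càdlàg. Then there exists a unique càdlàg function Y : [0,T] → ℝ such that Y(t) = y₀ + (Θ(t) − Θ(0)) − ∫_0^t h(Y(s))·α(s) ds for all t ∈ [0,T]. -/
open Filter Set MeasureTheory Topology

noncomputable section

/-- A function `x : ℝ → ℝ` is càdlàg on `[0,T]`: right-continuous at every `t ∈ [0,T)`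
and with a (finite) left limit at every `t ∈ (0,T]`. -/
def Cadlag (T : ℝ) (x : ℝ → ℝ) : Prop :=
  (∀ t ∈ Set.Ico (0:ℝ) T, Filter.Tendsto x (nhdsWithin t (Set.Ici t)) (nhds (x t))) ∧
  (∀ t ∈ Set.Ioc (0:ℝ) T, ∃ L : ℝ, Filter.Tendsto x (nhdsWithin t (Set.Iio t)) (nhds L))

/-- `Y` is the market impact process on `[0,T]` driven by the càdlàg strategy `Θ`,
i.e. the càdlàg solution of `dY = -h(Y) α dt + dΘ` with `Y(0-) = y₀`. -/
def ImpactSol (T : ℝ) (h α : ℝ → ℝ) (y₀ : ℝ) (Θ Y : ℝ → ℝ) : Prop :=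
  Cadlag T Y ∧ ∀ t ∈ Set.Icc (0:ℝ) T,
    Y t = y₀ + (Θ t - Θ 0) - ∫ s in (0:ℝ)..t, h (Y s) * α s

/-- A right-continuous real function is measurable. -/
lemma measurable_of_rightCont {f : ℝ → ℝ}
    (hf : ∀ t : ℝ, Filter.Tendsto f (nhdsWithin t (Set.Ici t)) (nhds (f t))) :
    Measurable f := by
  have key : ∀ s : ℝ, Filter.Tendsto (fun n : ℕ => f ((⌊(n + 1 : ℝ) * s⌋ + 1) / (n + 1)))
      Filter.atTop (nhds (f s)) := by
    intro s
    apply (hf s).comp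
    rw [tendsto_nhdsWithin_iff]
    constructor
    · apply tendsto_of_tendsto_of_tendsto_of_le_of_le (g := fun _ : ℕ => s)
        (h := fun n : ℕ => s + 1 / (n + 1)) tendsto_const_nhds
      · simpa using tendsto_const_nhds.add (tendsto_one_div_add_atTop_nhds_zero_nat (𝕜 := ℝ))
      · intro n
        have h1 : (0:ℝ) < (n + 1 : ℝ) := by positivity
        rw [le_div_iff₀ h1]
        nlinarith [Int.lt_floor_add_one ((n + 1 : ℝ) * s)]
      · intro n
        have h1 : (0:ℝ) < (n + 1 : ℝ) := by positivity
        rw [div_le_iff₀ h1]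
        have h2 : 1 / ((n:ℝ) + 1) * ((n:ℝ) + 1) = 1 := div_mul_cancel₀ 1 h1.ne'
        have := Int.floor_le ((n + 1 : ℝ) * s)
        nlinarith [h2]
    · filter_upwards with n
      have h1 : (0:ℝ) < (n + 1 : ℝ) := by positivity
      rw [Set.mem_Ici, le_div_iff₀ h1]
      nlinarith [Int.lt_floor_add_one ((n + 1 : ℝ) * s)]
  apply measurable_of_tendsto_metrizable (f := fun n : ℕ => fun s : ℝ =>
    f ((⌊(n + 1 : ℝ) * s⌋ + 1) / (n + 1)))
  · intro n
    exact (measurable_from_top (f := fun k : ℤ => f ((k + 1) / (n + 1)))).comp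
      (Int.measurable_floor.comp (measurable_const.mul measurable_id))
  · rw [tendsto_pi_nhds]
    exact key

/-- A càdlàg function is bounded on `[0,T]`. -/
lemma cadlag_bounded {T : ℝ} (hT : 0 < T) {x : ℝ → ℝ} (hx : Cadlag T x) :
    ∃ M : ℝ, ∀ s ∈ Set.Icc (0:ℝ) T, |x s| ≤ M := by
  have hloc : ∀ t ∈ Set.Icc (0:ℝ) T, ∃ δ > (0:ℝ), ∃ M : ℝ,
      ∀ s ∈ Set.Icc (0:ℝ) T, |s - t| < δ → |x s| ≤ M := by
    intro t ht
    have hright : ∃ δ > (0:ℝ), ∀ s ∈ Set.Icc (0:ℝ) T, t ≤ s → |s - t| < δ →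
        |x s| ≤ |x t| + 1 := by
      rcases eq_or_lt_of_le ht.2 with hEq | hlt
      · refine ⟨1, one_pos, fun s hs h1 h2 => ?_⟩
        have : s = t := le_antisymm (hEq ▸ hs.2) h1
        simp [this]
      · have h := (hx.1 t ⟨ht.1, hlt⟩)
        have hev : ∀ᶠ s in nhdsWithin t (Set.Ici t), |x s| ≤ |x t| + 1 := by
          filter_upwards [h (Metric.ball_mem_nhds (x t) one_pos)] with s hs
          rw [Set.mem_preimage, Metric.mem_ball, Real.dist_eq] at hs
          have := abs_sub_abs_le_abs_sub (x s) (x t)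
          linarith
        rw [eventually_nhdsWithin_iff, Metric.eventually_nhds_iff] at hev
        obtain ⟨δ, hδ, hball⟩ := hev
        exact ⟨δ, hδ, fun s _ h1 h2 => hball (by rwa [Real.dist_eq]) h1⟩
    have hleft : ∃ δ > (0:ℝ), ∃ M : ℝ, ∀ s ∈ Set.Icc (0:ℝ) T, s < t → |s - t| < δ →
        |x s| ≤ M := by
      rcases eq_or_lt_of_le ht.1 with hEq | hlt
      · exact ⟨1, one_pos, 0, fun s hs h1 _ => absurd (hEq ▸ hs.1) (not_le.2 h1)⟩
      · obtain ⟨Lt, hL⟩ := hx.2 t ⟨hlt, ht.2⟩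
        have hev : ∀ᶠ s in nhdsWithin t (Set.Iio t), |x s| ≤ |Lt| + 1 := by
          filter_upwards [hL (Metric.ball_mem_nhds Lt one_pos)] with s hs
          rw [Set.mem_preimage, Metric.mem_ball, Real.dist_eq] at hs
          have := abs_sub_abs_le_abs_sub (x s) Lt
          linarith
        rw [eventually_nhdsWithin_iff, Metric.eventually_nhds_iff] at hev
        obtain ⟨δ, hδ, hball⟩ := hev
        exact ⟨δ, hδ, |Lt| + 1, fun s _ h1 h2 => hball (by rwa [Real.dist_eq]) h1⟩
    obtain ⟨δ₁, hδ₁, hb₁⟩ := hright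
    obtain ⟨δ₂, hδ₂, M₂, hb₂⟩ := hleft
    refine ⟨min δ₁ δ₂, lt_min hδ₁ hδ₂, max (|x t| + 1) M₂, fun s hs hd => ?_⟩
    rcases le_or_gt t s with hts | hts
    · exact le_max_of_le_left (hb₁ s hs hts (lt_of_lt_of_le hd (min_le_left _ _)))
    · exact le_max_of_le_right (hb₂ s hs hts (lt_of_lt_of_le hd (min_le_right _ _)))
  classical
  choose! δ hδ M hM using hloc
  obtain ⟨ts, hts_sub, hcover⟩ := (isCompact_Icc (a := (0:ℝ)) (b := T)).elim_nhds_subcover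
    (fun t => Metric.ball t (δ t))
    (fun t ht => Metric.ball_mem_nhds t (hδ t ht))
  have hne : ts.Nonempty := by
    by_contra hempty
    rw [Finset.not_nonempty_iff_eq_empty] at hempty
    have := hcover (Set.left_mem_Icc.2 hT.le)
    simp [hempty] at this
  refine ⟨ts.sup' hne M, fun s hs => ?_⟩
  obtain ⟨t, htts, hst⟩ := Set.mem_iUnion₂.1 (hcover hs)
  exact le_trans (hM t (hts_sub t htts) s hs (by rwa [← Real.dist_eq, ← Metric.mem_ball]))
    (Finset.le_sup' M htts)

lemma clamp_mem {T : ℝ} (hT : 0 ≤ T) (s : ℝ) : max 0 (min s T) ∈ Set.Icc (0:ℝ) T :=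
  ⟨le_max_left _ _, max_le (by linarith) (min_le_right _ _)⟩

lemma clamp_eq {T s : ℝ} (hs : s ∈ Set.Icc (0:ℝ) T) : max 0 (min s T) = s := by
  rw [min_eq_left hs.2, max_eq_right hs.1]

lemma continuous_clamp (T : ℝ) : Continuous fun s : ℝ => max 0 (min s T) :=
  continuous_const.max (continuous_id.min continuous_const)

lemma rightCont_comp_clamp {T : ℝ} (hT : 0 < T) {x : ℝ → ℝ}
    (hx1 : ∀ t ∈ Set.Ico (0:ℝ) T, Filter.Tendsto x (nhdsWithin t (Set.Ici t)) (nhds (x t))) :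
    ∀ t : ℝ, Filter.Tendsto (fun s => x (max 0 (min s T))) (nhdsWithin t (Set.Ici t))
      (nhds (x (max 0 (min t T)))) := by
  intro t
  rcases lt_or_ge t 0 with ht | ht
  · have hclt : max 0 (min t T) = 0 := by
      rw [min_eq_left (by linarith), max_eq_left (by linarith)]
    rw [hclt]
    refine Filter.Tendsto.congr' (f₁ := fun _ => x 0) ?_ tendsto_const_nhds
    filter_upwards [nhdsWithin_le_nhds (Iio_mem_nhds ht)] with s hs
    rw [Set.mem_Iio] at hs
    rw [min_eq_left (by linarith), max_eq_left (by linarith)]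
  rcases lt_or_ge t T with htT | htT
  · rw [clamp_eq ⟨ht, htT.le⟩]
    refine Filter.Tendsto.congr' ?_ (hx1 t ⟨ht, htT⟩)
    filter_upwards [nhdsWithin_le_nhds (Iio_mem_nhds htT), self_mem_nhdsWithin] with s hs1 hs2
    rw [Set.mem_Iio] at hs1
    rw [Set.mem_Ici] at hs2
    rw [clamp_eq ⟨by linarith, hs1.le⟩]
  · have hclt : max 0 (min t T) = T := by
      rw [min_eq_right htT, max_eq_right hT.le]
    rw [hclt]
    refine Filter.Tendsto.congr' (f₁ := fun _ => x T) ?_ tendsto_const_nhds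
    filter_upwards [self_mem_nhdsWithin] with s hs
    rw [Set.mem_Ici] at hs
    rw [min_eq_right (by linarith), max_eq_right hT.le]

/-- A globally bounded measurable function is interval integrable on every interval. -/
lemma intervalIntegrable_of_bdd {f : ℝ → ℝ} (hm : Measurable f) {C : ℝ}
    (hb : ∀ s, |f s| ≤ C) (a b : ℝ) : IntervalIntegrable f MeasureTheory.volume a b := by
  rw [intervalIntegrable_iff]
  apply MeasureTheory.Integrable.mono' (g := fun _ => C)
  · exact MeasureTheory.integrableOn_const measure_Ioc_lt_top.ne
  · exact hm.aestronglyMeasurable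
  · exact Filter.Eventually.of_forall fun s => by rw [Real.norm_eq_abs]; exact hb s

/-- pathwise existence and uniqueness of the càdlàg impact process
`Y(t) = y₀ + (Θ(t) − Θ(0)) − ∫_0^t h(Y(s))·α(s) ds` for a Lipschitz resilience
function `h`, a continuous density `α` and a càdlàg strategy `Θ`. -/
theorem impact_process_exists_unique
    (T : ℝ) (hT : 0 < T) (h α Θ : ℝ → ℝ) (L : NNReal)
    (hh : LipschitzWith L h) (hα : ContinuousOn α (Set.Icc 0 T))
    (y₀ : ℝ) (hΘ : Cadlag T Θ) :
    ∃ Y : ℝ → ℝ, ImpactSol T h α y₀ Θ Y ∧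
      ∀ Y' : ℝ → ℝ, ImpactSol T h α y₀ Θ Y' → ∀ t ∈ Set.Icc (0:ℝ) T, Y' t = Y t := by
  classical
  have hT0 : (0:ℝ) ≤ T := hT.le
  have hL0 : (0:ℝ) ≤ (L:ℝ) := L.coe_nonneg
  -- bounds
  obtain ⟨MΘ, hMΘ⟩ := cadlag_bounded hT hΘ
  have hMΘ0 : 0 ≤ MΘ := (abs_nonneg _).trans (hMΘ 0 ⟨le_rfl, hT0⟩)
  obtain ⟨Mα, hMα⟩ := (isCompact_Icc (a := (0:ℝ)) (b := T)).exists_bound_of_continuousOn hα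
  have hMα0 : 0 ≤ Mα := le_trans (norm_nonneg _) (hMα 0 (Set.left_mem_Icc.2 hT0))
  have hh_bdd : ∀ z : ℝ, |h z| ≤ |h 0| + L * |z| := by
    intro z
    have h1 := hh.dist_le_mul z 0
    rw [Real.dist_eq, Real.dist_eq, sub_zero] at h1
    have h2 := abs_sub_abs_le_abs_sub (h z) (h 0)
    linarith
  set X := C(Set.Icc (0:ℝ) T, ℝ) with hX_def
  haveI : Nonempty X := ⟨0⟩
  -- drift and density
  set D : ℝ → ℝ := fun s => y₀ + (Θ (max 0 (min s T)) - Θ 0) with hD_def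
  set A : ℝ → ℝ := fun s => α (max 0 (min s T)) with hA_def
  have hD_meas : Measurable D := by
    rw [hD_def]
    exact measurable_const.add ((measurable_of_rightCont
      (rightCont_comp_clamp hT hΘ.1)).sub measurable_const)
  set MD : ℝ := |y₀| + MΘ + |Θ 0| with hMD_def
  have hMD0 : 0 ≤ MD := by positivity
  have hD_bdd : ∀ s, |D s| ≤ MD := by
    intro s
    have h1 : |Θ (max 0 (min s T))| ≤ MΘ := hMΘ _ (clamp_mem hT0 s)
    have h2 : |D s| ≤ |y₀| + |Θ (max 0 (min s T)) - Θ 0| := abs_add_le _ _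
    have h3 : |Θ (max 0 (min s T)) - Θ 0| ≤ |Θ (max 0 (min s T))| + |Θ 0| := abs_sub _ _
    rw [hMD_def]; linarith
  have hD_eq : ∀ s ∈ Set.Icc (0:ℝ) T, D s = y₀ + (Θ s - Θ 0) := by
    intro s hs; rw [hD_def]; simp only [clamp_eq hs]
  have hA_cont : Continuous A := by
    rw [hA_def]
    exact hα.comp_continuous (continuous_clamp T) (fun s => clamp_mem hT0 s)
  have hA_bdd : ∀ s, |A s| ≤ Mα := by
    intro s
    have := hMα _ (clamp_mem hT0 s)
    rwa [Real.norm_eq_abs] at this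
  have hA_eq : ∀ s ∈ Set.Icc (0:ℝ) T, A s = α s := by
    intro s hs; rw [hA_def]; simp only [clamp_eq hs]
  -- extension operator
  set E : X → ℝ → ℝ := fun g s => g ⟨max 0 (min s T), clamp_mem hT0 s⟩ with hE_def
  have hE_eq : ∀ (g : X) (s : ℝ) (hs : s ∈ Set.Icc (0:ℝ) T), E g s = g ⟨s, hs⟩ := by
    intro g s hs
    have hsub : (⟨max 0 (min s T), clamp_mem hT0 s⟩ : Set.Icc (0:ℝ) T) = ⟨s, hs⟩ :=
      Subtype.ext (clamp_eq hs)
    simp only [hE_def]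
    rw [hsub]
  have hE_cont : ∀ g : X, Continuous (E g) := by
    intro g
    simp only [hE_def]
    exact g.continuous.comp ((continuous_clamp T).subtype_mk _)
  have hE_bdd : ∀ (g : X) (s : ℝ), |E g s| ≤ ‖g‖ := by
    intro g s
    simp only [hE_def]
    have := g.norm_coe_le_norm ⟨max 0 (min s T), clamp_mem hT0 s⟩
    rwa [Real.norm_eq_abs] at this
  -- integrand
  set F : X → ℝ → ℝ := fun g s => h (D s + E g s) * A s with hF_def
  have hF_int : ∀ (g : X) (a b : ℝ), IntervalIntegrable (F g) MeasureTheory.volume a b := by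
    intro g a b
    apply intervalIntegrable_of_bdd (C := (|h 0| + L * (MD + ‖g‖)) * Mα)
    · rw [hF_def]
      exact ((hh.continuous.measurable).comp
        (hD_meas.add (hE_cont g).measurable)).mul hA_cont.measurable
    · intro s
      rw [hF_def]
      have h1 : |D s + E g s| ≤ MD + ‖g‖ := (abs_add_le _ _).trans
        (add_le_add (hD_bdd s) (hE_bdd g s))
      have h2 : |h (D s + E g s)| ≤ |h 0| + L * (MD + ‖g‖) :=
        (hh_bdd _).trans (by nlinarith)
      rw [abs_mul]
      exact mul_le_mul h2 (hA_bdd s) (abs_nonneg _) ((abs_nonneg _).trans h2)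
  -- the Picard map
  have hΦcont : ∀ g : X, Continuous fun t : Set.Icc (0:ℝ) T => -∫ s in (0:ℝ)..(t:ℝ), F g s :=
    fun g => ((intervalIntegral.continuous_primitive (hF_int g) 0).neg).comp
      continuous_subtype_val
  set Φ : X → X := fun g => ContinuousMap.mk
    (fun t : Set.Icc (0:ℝ) T => -∫ s in (0:ℝ)..(t:ℝ), F g s) (hΦcont g) with hΦ_def
  have hΦ_apply : ∀ (g : X) (t : Set.Icc (0:ℝ) T),
      Φ g t = -∫ s in (0:ℝ)..(t:ℝ), F g s := by
    intro g t; rw [hΦ_def]; rfl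
  -- one-step Lipschitz estimate on the integrand
  set c : ℝ := (L:ℝ) * Mα with hc_def
  have hc0 : 0 ≤ c := mul_nonneg hL0 hMα0
  have step : ∀ (u v : X) (s : ℝ) (hs : s ∈ Set.Icc (0:ℝ) T),
      |F u s - F v s| ≤ c * |u ⟨s, hs⟩ - v ⟨s, hs⟩| := by
    intro u v s hs
    have h1 : F u s - F v s = (h (D s + E u s) - h (D s + E v s)) * A s := by
      rw [hF_def]; ring
    have h2 : |h (D s + E u s) - h (D s + E v s)| ≤ L * |E u s - E v s| := by
      have := hh.dist_le_mul (D s + E u s) (D s + E v s)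
      rw [Real.dist_eq, Real.dist_eq, add_sub_add_left_eq_sub] at this
      exact this
    rw [h1, abs_mul]
    calc |h (D s + E u s) - h (D s + E v s)| * |A s|
        ≤ (L * |E u s - E v s|) * Mα :=
          mul_le_mul h2 (hA_bdd s) (abs_nonneg _) (by positivity)
      _ = c * |u ⟨s, hs⟩ - v ⟨s, hs⟩| := by
          rw [hE_eq u s hs, hE_eq v s hs, hc_def]; ring
  -- iterated estimate
  have key : ∀ n : ℕ, ∀ u v : X, ∀ (t : ℝ) (ht : t ∈ Set.Icc (0:ℝ) T),
      |Φ^[n] u ⟨t, ht⟩ - Φ^[n] v ⟨t, ht⟩| ≤ c ^ n * t ^ n / n.factorial * dist u v := by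
    intro n
    induction n with
    | zero =>
      intro u v t ht
      simp only [Function.iterate_zero, id_eq, pow_zero, Nat.factorial_zero, Nat.cast_one,
        one_mul, mul_one, div_one]
      rw [← Real.dist_eq]
      exact ContinuousMap.dist_apply_le_dist _
    | succ n ih =>
      intro u v t ht
      have h1 : Φ^[n+1] u ⟨t, ht⟩ - Φ^[n+1] v ⟨t, ht⟩
          = -∫ s in (0:ℝ)..t, (F (Φ^[n] u) s - F (Φ^[n] v) s) := by
        rw [Function.iterate_succ_apply', Function.iterate_succ_apply', hΦ_apply, hΦ_apply,
          intervalIntegral.integral_sub (hF_int _ 0 t) (hF_int _ 0 t)]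
        ring
      rw [h1, abs_neg]
      have hint2 : IntervalIntegrable
          (fun s : ℝ => c * (c ^ n * s ^ n / n.factorial * dist u v))
          MeasureTheory.volume 0 t := (Continuous.intervalIntegrable (by fun_prop) 0 t)
      calc |∫ s in (0:ℝ)..t, (F (Φ^[n] u) s - F (Φ^[n] v) s)|
          ≤ ∫ s in (0:ℝ)..t, |F (Φ^[n] u) s - F (Φ^[n] v) s| :=
            intervalIntegral.abs_integral_le_integral_abs ht.1
        _ ≤ ∫ s in (0:ℝ)..t, c * (c ^ n * s ^ n / n.factorial * dist u v) := by
            apply intervalIntegral.integral_mono_on ht.1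
              (((hF_int _ 0 t).sub (hF_int _ 0 t)).abs) hint2
            intro s hs
            have hsI : s ∈ Set.Icc (0:ℝ) T := ⟨hs.1, hs.2.trans ht.2⟩
            calc |F (Φ^[n] u) s - F (Φ^[n] v) s|
                ≤ c * |Φ^[n] u ⟨s, hsI⟩ - Φ^[n] v ⟨s, hsI⟩| := step _ _ s hsI
              _ ≤ c * (c ^ n * s ^ n / n.factorial * dist u v) :=
                  mul_le_mul_of_nonneg_left (ih u v s hsI) hc0
        _ = c ^ (n+1) * t ^ (n+1) / (n+1).factorial * dist u v := by
            have hrw : (fun s : ℝ => c * (c ^ n * s ^ n / n.factorial * dist u v))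
                = fun s : ℝ => (c ^ (n+1) * dist u v / n.factorial) * s ^ n := by
              funext s; ring
            rw [hrw, intervalIntegral.integral_const_mul, integral_pow]
            have hfact : (((n+1).factorial : ℕ) : ℝ) = ((n:ℝ)+1) * (n.factorial : ℝ) := by
              rw [Nat.factorial_succ]; push_cast; ring
            rw [hfact]
            have hf1 : (n.factorial : ℝ) ≠ 0 := Nat.cast_ne_zero.2 n.factorial_ne_zero
            have hf2 : ((n:ℝ) + 1) ≠ 0 := by positivity
            field_simp
            ring
  -- contraction of an iterate
  have hdistΦ : ∀ (n : ℕ) (u v : X),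
      dist (Φ^[n] u) (Φ^[n] v) ≤ c ^ n * T ^ n / n.factorial * dist u v := by
    intro n u v
    rw [ContinuousMap.dist_le (by positivity)]
    intro x
    rw [Real.dist_eq]
    have h1 := key n u v x.val x.2
    have h2 : (⟨x.val, x.2⟩ : Set.Icc (0:ℝ) T) = x := rfl
    rw [h2] at h1
    refine h1.trans ?_
    have hx0 : (0:ℝ) ≤ x.val := x.2.1
    have hxT : x.val ≤ T := x.2.2
    gcongr
  obtain ⟨n, hn⟩ : ∃ n : ℕ, c ^ n * T ^ n / n.factorial < 1 := by
    have hev := (FloorSemiring.tendsto_pow_div_factorial_atTop (c * T)).eventually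
      (gt_mem_nhds one_pos)
    obtain ⟨n, hn⟩ := hev.exists
    exact ⟨n, by rwa [mul_pow] at hn⟩
  set K : NNReal := Real.toNNReal (c ^ n * T ^ n / n.factorial) with hK_def
  have hK_coe : (K:ℝ) = c ^ n * T ^ n / n.factorial := by
    rw [hK_def, Real.coe_toNNReal _ (by positivity)]
  have hcontr : ContractingWith K (Φ^[n]) := by
    constructor
    · rw [← NNReal.coe_lt_coe, NNReal.coe_one, hK_coe]; exact hn
    · apply LipschitzWith.of_dist_le_mul
      intro u v
      rw [hK_coe]
      exact hdistΦ n u v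
  set G : X := ContractingWith.fixedPoint (Φ^[n]) hcontr with hG_def
  have hfix : Φ G = G := hcontr.isFixedPt_fixedPoint_iterate
  have huniq : ∀ g : X, Φ g = g → g = G := by
    intro g hg
    exact hcontr.fixedPoint_unique (Function.IsFixedPt.iterate hg n)
  -- a fixed point satisfies the integral identity
  have hfix_eq : ∀ (g : X), Φ g = g → ∀ (t : ℝ) (ht : t ∈ Set.Icc (0:ℝ) T),
      g ⟨t, ht⟩ = -∫ s in (0:ℝ)..t, F g s := by
    intro g hg t ht
    conv_lhs => rw [← hg]
    exact hΦ_apply g ⟨t, ht⟩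
  -- the solution
  refine ⟨fun t => y₀ + (Θ t - Θ 0) + E G t, ⟨⟨?_, ?_⟩, ?_⟩, ?_⟩
  · -- right continuity
    intro t ht
    exact (tendsto_const_nhds.add ((hΘ.1 t ht).sub tendsto_const_nhds)).add
      (((hE_cont G).tendsto t).mono_left nhdsWithin_le_nhds)
  · -- left limits
    intro t ht
    obtain ⟨Lt, hLt⟩ := hΘ.2 t ht
    exact ⟨y₀ + (Lt - Θ 0) + E G t,
      (tendsto_const_nhds.add (hLt.sub tendsto_const_nhds)).add
        (((hE_cont G).tendsto t).mono_left nhdsWithin_le_nhds)⟩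
  · -- the integral equation
    intro t ht
    show y₀ + (Θ t - Θ 0) + E G t
      = y₀ + (Θ t - Θ 0) - ∫ s in (0:ℝ)..t, h (y₀ + (Θ s - Θ 0) + E G s) * α s
    have h1 : E G t = -∫ s in (0:ℝ)..t, F G s := by
      rw [hE_eq G t ht]
      exact hfix_eq G hfix t ht
    have h2 : ∫ s in (0:ℝ)..t, F G s
        = ∫ s in (0:ℝ)..t, h (y₀ + (Θ s - Θ 0) + E G s) * α s := by
      apply intervalIntegral.integral_congr
      rw [Set.uIcc_of_le ht.1]
      intro s hs
      have hsI : s ∈ Set.Icc (0:ℝ) T := ⟨hs.1, hs.2.trans ht.2⟩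
      show h (D s + E G s) * A s = _
      rw [hA_eq s hsI, hD_eq s hsI]
    rw [h1, h2]
    ring
  · -- uniqueness
    intro Y' hY' t ht
    obtain ⟨MY', hMY'⟩ := cadlag_bounded hT hY'.1
    have hMY'0 : 0 ≤ MY' := (abs_nonneg _).trans (hMY' 0 ⟨le_rfl, hT0⟩)
    have hY'meas : Measurable fun s : ℝ => Y' (max 0 (min s T)) :=
      measurable_of_rightCont (rightCont_comp_clamp hT hY'.1.1)
    set K' : ℝ → ℝ := fun s => h (Y' (max 0 (min s T))) * A s with hK'_def
    have hK'_int : ∀ a b : ℝ, IntervalIntegrable K' MeasureTheory.volume a b := by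
      intro a b
      apply intervalIntegrable_of_bdd (C := (|h 0| + L * MY') * Mα)
      · rw [hK'_def]
        exact (hh.continuous.measurable.comp hY'meas).mul hA_cont.measurable
      · intro s
        rw [hK'_def]
        have h1 : |Y' (max 0 (min s T))| ≤ MY' := hMY' _ (clamp_mem hT0 s)
        have h2 : |h (Y' (max 0 (min s T)))| ≤ |h 0| + L * MY' :=
          (hh_bdd _).trans (by nlinarith)
        rw [abs_mul]
        exact mul_le_mul h2 (hA_bdd s) (abs_nonneg _) ((abs_nonneg _).trans h2)
    have hg'cont : Continuous fun t : Set.Icc (0:ℝ) T => -∫ s in (0:ℝ)..(t:ℝ), K' s :=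
      ((intervalIntegral.continuous_primitive hK'_int 0).neg).comp continuous_subtype_val
    set g' : X := ContinuousMap.mk
      (fun t : Set.Icc (0:ℝ) T => -∫ s in (0:ℝ)..(t:ℝ), K' s) hg'cont with hg'_def
    have claim1 : ∀ (s : ℝ) (hs : s ∈ Set.Icc (0:ℝ) T),
        g' ⟨s, hs⟩ = Y' s - (y₀ + (Θ s - Θ 0)) := by
      intro s hs
      have h0 : g' ⟨s, hs⟩ = -∫ u in (0:ℝ)..s, K' u := by rw [hg'_def]; rfl
      have h1 : ∫ u in (0:ℝ)..s, K' u = ∫ u in (0:ℝ)..s, h (Y' u) * α u := by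
        apply intervalIntegral.integral_congr
        rw [Set.uIcc_of_le hs.1]
        intro u hu
        have huI : u ∈ Set.Icc (0:ℝ) T := ⟨hu.1, hu.2.trans hs.2⟩
        rw [hK'_def]
        simp only [clamp_eq huI, hA_eq u huI]
      rw [h0, h1]
      have h2 := hY'.2 s hs
      linarith [h2]
    have claim2 : Φ g' = g' := by
      apply ContinuousMap.ext
      intro x
      rw [hΦ_apply]
      have hgx : g' x = -∫ s in (0:ℝ)..(x:ℝ), K' s := by rw [hg'_def]; rfl
      rw [hgx]
      congr 1
      apply intervalIntegral.integral_congr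
      rw [Set.uIcc_of_le x.2.1]
      intro s hs
      have hsI : s ∈ Set.Icc (0:ℝ) T := ⟨hs.1, hs.2.trans x.2.2⟩
      show h (D s + E g' s) * A s = K' s
      rw [hE_eq g' s hsI, claim1 s hsI, hD_eq s hsI, hK'_def]
      simp only [clamp_eq hsI]
      congr 1
      ring
    have hg'G : g' = G := huniq g' claim2
    show Y' t = y₀ + (Θ t - Θ 0) + E G t
    rw [hE_eq G t ht, ← hg'G, claim1 t ht]
    ring
end
end

section
/- Let T > 0, let h : ℝ → ℝ be Lipschitz continuous, let α : [0,T] → ℝ be Lipschitz continuous, and let y₀ ∈ ℝ. If Θ_n (n ≥ 1) and Θ are càdlàg functions on [0,T] such that Θ_n → Θ in the Skorokhod J1 topology, then the impact processes converge Y^{Θ_n} → Y^{Θ} in the Skorokhod J1 topology (all solutions taken with the same initial value y₀). -/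
open Filter Set MeasureTheory Topology

noncomputable section

/-- Convergence `xₙ → x₀` in the Skorokhod J1 topology on `D([0,T];ℝ)`: there are
strictly increasing continuous bijections `λₙ : [0,T] → [0,T]` with
`sup_{[0,T]} |λₙ(t) − t| → 0` and `sup_{[0,T]} |xₙ(λₙ(t)) − x₀(t)| → 0`. -/
def TendstoJ1 (T : ℝ) (x : ℕ → ℝ → ℝ) (x₀ : ℝ → ℝ) : Prop :=
  ∃ lam : ℕ → ℝ → ℝ,
    (∀ n, ContinuousOn (lam n) (Set.Icc 0 T) ∧ StrictMonoOn (lam n) (Set.Icc 0 T) ∧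
      lam n 0 = 0 ∧ lam n T = T ∧ Set.MapsTo (lam n) (Set.Icc 0 T) (Set.Icc 0 T)) ∧
    (∀ ε > (0:ℝ), ∃ N : ℕ, ∀ n ≥ N, ∀ t ∈ Set.Icc (0:ℝ) T,
      |lam n t - t| ≤ ε ∧ |x n (lam n t) - x₀ t| ≤ ε)

section Helpers

lemma cadlag_meas {T : ℝ} {x : ℝ → ℝ} (hT : 0 ≤ T) (hx : Cadlag T x) :
    Measurable (fun s : ℝ => x (max 0 (min s T))) := by
  set c : ℝ → ℝ := fun s => max 0 (min s T) with hc
  have hcmem : ∀ s, c s ∈ Icc 0 T := fun s =>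
    ⟨le_max_left _ _, max_le hT (min_le_right _ _)⟩
  have hcmono : Monotone c := fun s u hsu =>
    max_le_max le_rfl (min_le_min hsu le_rfl)
  set g : ℕ → ℝ → ℝ := fun k s => min T ((⌈c s * 2^k⌉ : ℝ)/2^k) with hg
  have hpow : ∀ k : ℕ, (0:ℝ) < 2^k := fun k => by positivity
  have hglow : ∀ k s, c s ≤ g k s := by
    intro k s
    refine le_min (hcmem s).2 ?_
    rw [le_div_iff₀ (hpow k)]
    exact Int.le_ceil _
  have hghigh : ∀ k s, g k s ≤ c s + (1/2)^k := by
    intro k s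
    refine le_trans (min_le_right _ _) ?_
    rw [div_le_iff₀ (hpow k)]
    calc ((⌈c s * 2^k⌉ : ℝ)) ≤ c s * 2^k + 1 := (Int.ceil_lt_add_one _).le
      _ = (c s + (1/2)^k) * 2^k := by
          rw [add_mul, one_div_pow, div_mul_cancel₀ _ (hpow k).ne']
  have hgmono : ∀ k, Monotone (g k) := by
    intro k s u hsu
    refine min_le_min le_rfl ?_
    have := hcmono hsu
    gcongr
  have hmeas : ∀ k, Measurable (fun s => x (g k s)) := by
    intro k
    set S : Set ℝ := insert T (Set.range (fun j : ℤ => (j:ℝ)/2^k)) with hS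
    have hSc : S.Countable := (Set.countable_range _).insert T
    have hmemS : ∀ s, g k s ∈ S := by
      intro s
      rcases min_cases T ((⌈c s * 2^k⌉ : ℝ)/2^k) with ⟨h1, _⟩ | ⟨h1, _⟩
      · rw [hg]; simp only [h1]; exact Set.mem_insert _ _
      · rw [hg]; simp only [h1]
        exact Set.mem_insert_of_mem _ ⟨⌈c s * 2^k⌉, rfl⟩
    have : Countable ↥S := hSc.to_subtype
    have hsub : Measurable (fun s => (⟨g k s, hmemS s⟩ : S)) :=
      ((hgmono k).measurable).subtype_mk
    exact (measurable_of_countable (fun v : S => x v)).comp hsub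
  have hlim : Tendsto (fun k => fun s => x (g k s)) atTop (𝓝 (fun s => x (c s))) := by
    rw [tendsto_pi_nhds]
    intro t
    rcases eq_or_lt_of_le (hcmem t).2 with hTeq | hlt
    · have : ∀ k, g k t = T := by
        intro k
        refine min_eq_left ?_
        rw [le_div_iff₀ (hpow k), ← hTeq]
        exact Int.le_ceil _
      simp only [this, hTeq]
      exact tendsto_const_nhds
    · have hseq : Tendsto (fun k => g k t) atTop (𝓝 (c t)) := by
        have h2 : Tendsto (fun k : ℕ => c t + (1/2:ℝ)^k) atTop (𝓝 (c t + 0)) :=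
          tendsto_const_nhds.add
            (tendsto_pow_atTop_nhds_zero_of_lt_one (by norm_num) (by norm_num))
        rw [add_zero] at h2
        exact tendsto_of_tendsto_of_tendsto_of_le_of_le tendsto_const_nhds h2
          (fun k => hglow k t) (fun k => hghigh k t)
      have hseq' : Tendsto (fun k => g k t) atTop (𝓝[Set.Ici (c t)] (c t)) :=
        tendsto_nhdsWithin_iff.mpr ⟨hseq, Eventually.of_forall (fun k => hglow k t)⟩
      exact (hx.1 (c t) ⟨(hcmem t).1, hlt⟩).comp hseq'
  exact measurable_of_tendsto_metrizable hmeas hlim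

lemma cadlag_bdd {T : ℝ} {x : ℝ → ℝ} (hT : 0 ≤ T) (hx : Cadlag T x) :
    ∃ M : ℝ, 0 ≤ M ∧ ∀ s ∈ Icc 0 T, |x s| ≤ M := by
  set S : Set ℝ := {u | u ∈ Icc 0 T ∧ ∃ M, ∀ s ∈ Icc 0 u, |x s| ≤ M} with hSdef
  have h0S : (0:ℝ) ∈ S := by
    refine ⟨⟨le_rfl, hT⟩, |x 0|, fun s hs => ?_⟩
    have : s = 0 := le_antisymm hs.2 hs.1
    simp [this]
  have hbdd : BddAbove S := ⟨T, fun u hu => hu.1.2⟩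
  set u := sSup S with hu
  have huIcc : u ∈ Icc 0 T := ⟨le_csSup hbdd h0S, csSup_le ⟨0, h0S⟩ (fun v hv => hv.1.2)⟩
  have huS : u ∈ S := by
    rcases eq_or_lt_of_le huIcc.1 with h0u | h0u
    · rwa [← h0u]
    · obtain ⟨Lu, hLu⟩ := hx.2 u ⟨h0u, huIcc.2⟩
      have hball : x ⁻¹' Metric.closedBall Lu 1 ∈ 𝓝[<] u :=
        hLu (Metric.closedBall_mem_nhds Lu one_pos)
      obtain ⟨a, hau, hasub⟩ := mem_nhdsLT_iff_exists_Ioo_subset.mp hball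
      obtain ⟨v, hvS, hav⟩ := exists_lt_of_lt_csSup ⟨0, h0S⟩ (show a < sSup S from hau)
      obtain ⟨Mv, hMv⟩ := hvS.2
      refine ⟨huIcc, max Mv (max (|Lu| + 1) |x u|), fun s hs => ?_⟩
      rcases le_or_gt s v with hsv | hsv
      · exact le_trans (hMv s ⟨hs.1, hsv⟩) (le_max_left _ _)
      · rcases eq_or_lt_of_le hs.2 with hsu | hsu
        · rw [hsu]; exact le_trans (le_max_right _ _) (le_max_right _ _)
        · have hmem : s ∈ Ioo a u := ⟨lt_trans hav hsv, hsu⟩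
          have := hasub hmem
          simp only [Set.mem_preimage, Metric.mem_closedBall, Real.dist_eq] at this
          have : |x s| ≤ |Lu| + 1 := by
            calc |x s| ≤ |x s - Lu| + |Lu| := by
                  have := abs_sub_abs_le_abs_sub (x s) Lu; linarith [abs_abs (x s)]
              _ ≤ 1 + |Lu| := by linarith
              _ = |Lu| + 1 := by ring
          exact le_trans this (le_trans (le_max_left _ _) (le_max_right _ _))
  have huT : u = T := by
    by_contra hne
    have huT : u < T := lt_of_le_of_ne huIcc.2 hne
    have hrc := hx.1 u ⟨huIcc.1, huT⟩
    have hball : x ⁻¹' Metric.closedBall (x u) 1 ∈ 𝓝[≥] u :=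
      hrc (Metric.closedBall_mem_nhds (x u) one_pos)
    obtain ⟨b, hbu, hbsub⟩ := mem_nhdsGE_iff_exists_Ico_subset.mp hball
    set w := min T ((u + b)/2) with hw
    have hw1 : u < w := lt_min huT (by simp only [Set.mem_Ioi] at hbu; linarith)
    have hw2 : w ∈ Icc 0 T := ⟨le_trans huIcc.1 hw1.le, min_le_left _ _⟩
    obtain ⟨Mu, hMu⟩ := huS.2
    have hwS : w ∈ S := by
      refine ⟨hw2, max Mu (|x u| + 1), fun s hs => ?_⟩
      rcases le_or_gt s u with hsu | hsu
      · exact le_trans (hMu s ⟨hs.1, hsu⟩) (le_max_left _ _)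
      · have hsb : s < b := by
          have : w ≤ (u + b)/2 := min_le_right _ _
          simp only [Set.mem_Ioi] at hbu
          have := hs.2; linarith
        have := hbsub ⟨hsu.le, hsb⟩
        simp only [Set.mem_preimage, Metric.mem_closedBall, Real.dist_eq] at this
        have : |x s| ≤ |x u| + 1 := by
          calc |x s| ≤ |x s - x u| + |x u| := by
                have := abs_sub_abs_le_abs_sub (x s) (x u); linarith [abs_abs (x s)]
            _ ≤ 1 + |x u| := by linarith
            _ = |x u| + 1 := by ring
        exact le_trans this (le_max_right _ _)
    exact absurd (le_csSup hbdd hwS) (not_le.mpr hw1)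
  obtain ⟨M, hM⟩ := huS.2
  rw [huT] at hM
  exact ⟨max M 0, le_max_right _ _, fun s hs => le_trans (hM s hs) (le_max_left _ _)⟩

lemma cadlag_ctble {T : ℝ} {x : ℝ → ℝ} (hx : Cadlag T x) :
    ∃ D : Set ℝ, D.Countable ∧ ∀ s ∈ Ioo (0:ℝ) T, s ∉ D → ContinuousAt x s := by
  classical
  set D : Set ℝ := {s | s ∈ Ioo (0:ℝ) T ∧ ¬ ContinuousAt x s} with hD
  refine ⟨D, ?_, fun s hs hsD => by by_contra hc; exact hsD ⟨hs, hc⟩⟩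
  have hkey : ∀ s ∈ D, ∃ p : ℚ × ℚ, (p.1 : ℝ) < s ∧
      ∃ Ls : ℝ, (3 * (p.2:ℝ) < |x s - Ls|) ∧
      (∀ u : ℝ, (p.1:ℝ) < u → u < s → |x u - Ls| < (p.2:ℝ)) := by
    intro s hs
    obtain ⟨⟨hs0, hsT⟩, hnc⟩ := hs
    obtain ⟨Ls, hLs⟩ := hx.2 s ⟨hs0, le_of_lt hsT⟩
    have hne : x s ≠ Ls := by
      intro heq
      apply hnc
      rw [ContinuousAt, ← nhdsLT_sup_nhdsGE s, tendsto_sup]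
      exact ⟨heq ▸ hLs, hx.1 s ⟨le_of_lt hs0, hsT⟩⟩
    have heps : 0 < |x s - Ls| := abs_pos.mpr (sub_ne_zero.mpr hne)
    obtain ⟨r, hr1, hr2⟩ := exists_rat_btwn (show (0:ℝ) < |x s - Ls|/4 by linarith)
    have hball : x ⁻¹' Metric.ball Ls r ∈ 𝓝[<] s :=
      hLs (Metric.ball_mem_nhds Ls (by exact_mod_cast hr1))
    obtain ⟨a, has, hasub⟩ := mem_nhdsLT_iff_exists_Ioo_subset.mp hball
    obtain ⟨q, hq1, hq2⟩ := exists_rat_btwn (show a < s from has)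
    refine ⟨⟨q, r⟩, hq2, Ls, by simp only; linarith, ?_⟩
    intro u hqu hus
    have := hasub ⟨lt_trans hq1 hqu, hus⟩
    simpa [Real.dist_eq] using this
  choose! F hF1 hF3 using hkey
  have haux : ∀ s ∈ D, ∀ s' ∈ D, s < s' → F s ≠ F s' := by
    intro s hsD s' hs'D hss' heq
    obtain ⟨Ls, hLs1, hLs2⟩ := hF3 s hsD
    obtain ⟨Ls', hLs1', hLs2'⟩ := hF3 s' hs'D
    have hq : (((F s).1 : ℝ)) < s := hF1 s hsD
    have hq' : (((F s).1 : ℝ)) < s' := lt_trans hq hss'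
    have h1 : |x s - Ls'| < ((F s).2 : ℝ) := by
      have := hLs2' s (by rw [← heq] at *; exact hq) hss'
      rw [← heq] at this; exact this
    obtain ⟨w, hw1, hw2⟩ := exists_between hq
    have h2 : |x w - Ls| < ((F s).2 : ℝ) := hLs2 w hw1 hw2
    have h3 : |x w - Ls'| < ((F s).2 : ℝ) := by
      have := hLs2' w (by rw [← heq] at *; exact hw1) (lt_trans hw2 hss')
      rw [← heq] at this; exact this
    have : |x s - Ls| < 3 * ((F s).2 : ℝ) := by
      have e1 : |x s - Ls| ≤ |x s - Ls'| + |x w - Ls'| + |x w - Ls| := by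
        calc |x s - Ls| = |(x s - Ls') - (x w - Ls') + (x w - Ls)| := by ring_nf
          _ ≤ |(x s - Ls') - (x w - Ls')| + |x w - Ls| := abs_add_le _ _
          _ ≤ (|x s - Ls'| + |x w - Ls'|) + |x w - Ls| := by
              linarith [abs_sub_abs_le_abs_sub (x s - Ls') (x w - Ls'),
                abs_sub_le (x s - Ls') 0 (x w - Ls'),
                abs_sub (x s - Ls') (x w - Ls')]
      linarith
    linarith
  have hinj : Set.InjOn F D := by
    intro s hs s' hs' heq
    by_contra hne
    rcases lt_or_gt_of_ne hne with hlt | hlt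
    · exact haux s hs s' hs' hlt heq
    · exact haux s' hs' s hs hlt heq.symm
  have hcnt : Function.Injective (fun s : ↥D => F s) := fun a b hab =>
    Subtype.ext (hinj a.2 b.2 hab)
  exact Set.countable_coe_iff.mp hcnt.countable

lemma bm_intInt {f : ℝ → ℝ} {M : ℝ} (hf : Measurable f) (hM : ∀ s, |f s| ≤ M)
    (a b : ℝ) : IntervalIntegrable f volume a b := by
  rw [intervalIntegrable_iff]
  refine Integrable.mono' (g := fun _ => M)
    (integrableOn_const (C := M) measure_Ioc_lt_top.ne)
    hf.aestronglyMeasurable.restrict (ae_of_all _ (fun s => ?_))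
  simpa using hM s

lemma int_abs_le {f b : ℝ → ℝ} {p q : ℝ} (hpq : p ≤ q)
    (hfi : IntervalIntegrable f volume p q) (hbi : IntervalIntegrable b volume p q)
    (hb : ∀ u ∈ Icc p q, |f u| ≤ b u) :
    |∫ u in p..q, f u| ≤ ∫ u in p..q, b u :=
  (intervalIntegral.abs_integral_le_integral_abs hpq).trans
    (intervalIntegral.integral_mono_on hpq hfi.abs hbi hb)

lemma gron {T C M : ℝ} (hT : 0 ≤ T) (hC : 0 ≤ C) (g a : ℝ → ℝ)
    (hg : Measurable g) (ha : Measurable a)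
    (hg0 : ∀ s, 0 ≤ g s) (hgM : ∀ s, g s ≤ M)
    (ha0 : ∀ s, 0 ≤ a s) (haM : ∃ Ma, ∀ s, |a s| ≤ Ma)
    (hyp : ∀ t ∈ Icc (0:ℝ) T, g t ≤ a t + C * ∫ s in (0:ℝ)..t, g s) :
    ∀ t ∈ Icc (0:ℝ) T, (∫ s in (0:ℝ)..t, g s) ≤ (∫ s in (0:ℝ)..T, a s) * Real.exp (C * T) := by
  have hM0 : 0 ≤ M := le_trans (hg0 0) (hgM 0)
  have hgabs : ∀ s, |g s| ≤ M := fun s => by rw [abs_of_nonneg (hg0 s)]; exact hgM s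
  have hgInt : ∀ p q : ℝ, IntervalIntegrable g volume p q := bm_intInt hg hgabs
  obtain ⟨Ma, haMa⟩ := haM
  have haInt : ∀ p q : ℝ, IntervalIntegrable a volume p q := bm_intInt ha haMa
  set I : ℝ → ℝ := fun t => ∫ s in (0:ℝ)..t, g s with hI
  have hIlip : LipschitzWith M.toNNReal I := by
    refine LipschitzWith.of_dist_le_mul (fun p q => ?_)
    rw [Real.dist_eq, Real.dist_eq, hI]
    have : (∫ s in (0:ℝ)..p, g s) - (∫ s in (0:ℝ)..q, g s) = ∫ s in q..p, g s :=
      intervalIntegral.integral_interval_sub_left (hgInt 0 p) (hgInt 0 q)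
    rw [this]
    have := intervalIntegral.norm_integral_le_of_norm_le_const
      (C := M) (f := g) (a := q) (b := p) (fun u _ => by simpa using hgabs u)
    simpa [Real.norm_eq_abs, Real.coe_toNNReal M hM0, abs_sub_comm p q] using this
  have hIcont : Continuous I := hIlip.continuous
  have hI0 : ∀ t, 0 ≤ t → 0 ≤ I t := fun t ht =>
    intervalIntegral.integral_nonneg ht (fun u hu => hg0 u)
  set Ia : ℝ := ∫ s in (0:ℝ)..T, a s with hIa
  have hIa0 : 0 ≤ Ia := intervalIntegral.integral_nonneg hT (fun u hu => ha0 u)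
  have hat : ∀ t ∈ Icc (0:ℝ) T, (∫ s in (0:ℝ)..t, a s) ≤ Ia := by
    intro t ht
    have hsplit : (∫ s in (0:ℝ)..t, a s) + (∫ s in t..T, a s) = Ia :=
      intervalIntegral.integral_add_adjacent_intervals (haInt 0 t) (haInt t T)
    have : 0 ≤ ∫ s in t..T, a s := intervalIntegral.integral_nonneg ht.2 (fun u hu => ha0 u)
    linarith
  have step1 : ∀ t ∈ Icc (0:ℝ) T, I t ≤ Ia + C * ∫ s in (0:ℝ)..t, I s := by
    intro t ht
    have hmono : I t ≤ ∫ s in (0:ℝ)..t, (a s + C * I s) := by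
      refine intervalIntegral.integral_mono_on ht.1 (hgInt 0 t) ?_ (fun u hu => ?_)
      · exact (haInt 0 t).add (((hIcont.intervalIntegrable 0 t)).const_mul C)
      · exact hyp u ⟨hu.1, le_trans hu.2 ht.2⟩
    have heq : (∫ s in (0:ℝ)..t, (a s + C * I s))
        = (∫ s in (0:ℝ)..t, a s) + C * ∫ s in (0:ℝ)..t, I s := by
      rw [intervalIntegral.integral_add (haInt 0 t)
        ((hIcont.intervalIntegrable 0 t).const_mul C), intervalIntegral.integral_const_mul]
    rw [heq] at hmono
    have := hat t ht
    linarith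
  set J : ℝ → ℝ := fun t => Ia + C * ∫ s in (0:ℝ)..t, I s with hJ
  have hJd : ∀ b : ℝ, HasDerivAt J (C * I b) b := by
    intro b
    have h1 : HasDerivAt (fun u => ∫ s in (0:ℝ)..u, I s) (I b) b :=
      intervalIntegral.integral_hasDerivAt_right (hIcont.intervalIntegrable 0 b)
        hIcont.stronglyMeasurable.stronglyMeasurableAtFilter hIcont.continuousAt
    exact (h1.const_mul C).const_add Ia
  have hJI : ∀ t ∈ Icc (0:ℝ) T, I t ≤ J t := step1
  have hJ0 : ∀ t ∈ Icc (0:ℝ) T, 0 ≤ J t := by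
    intro t ht
    have h1 : 0 ≤ ∫ s in (0:ℝ)..t, I s :=
      intervalIntegral.integral_nonneg ht.1 (fun u hu => hI0 u hu.1)
    simp only [hJ]
    exact add_nonneg hIa0 (mul_nonneg hC h1)
  have hgronwall := norm_le_gronwallBound_of_norm_deriv_right_le
    (f := J) (f' := fun t => C * I t) (δ := Ia) (K := C) (ε := 0) (a := 0) (b := T)
    (fun t ht => (hJd t).continuousAt.continuousWithinAt)
    (fun t ht => (hJd t).hasDerivWithinAt)
    (by simp [hJ, Real.norm_eq_abs, abs_of_nonneg hIa0])
    (fun t ht => by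
      have htIcc : t ∈ Icc (0:ℝ) T := ⟨ht.1, ht.2.le⟩
      rw [Real.norm_eq_abs, Real.norm_eq_abs, abs_of_nonneg (mul_nonneg hC (hI0 t ht.1)),
        abs_of_nonneg (hJ0 t htIcc), add_zero]
      exact mul_le_mul_of_nonneg_left (hJI t htIcc) hC)
  intro t ht
  have h1 := hgronwall t ht
  rw [gronwallBound_ε0, Real.norm_eq_abs, abs_of_nonneg (hJ0 t ht)] at h1
  have h2 : Ia * Real.exp (C * (t - 0)) ≤ Ia * Real.exp (C * T) := by
    apply mul_le_mul_of_nonneg_left _ hIa0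
    exact Real.exp_le_exp.mpr (by nlinarith [ht.1, ht.2])
  have := hJI t ht
  linarith

lemma habs3 (a b c : ℝ) : |a - b - c| ≤ |a| + |b| + |c| := by
  have h1 : |a - b - c| ≤ |a - b| + |c| := by
    have := abs_add_le (a - b) (-c)
    simpa [sub_eq_add_neg, abs_neg] using this
  have h2 : |a - b| ≤ |a| + |b| := by
    have := abs_add_le a (-b)
    simpa [sub_eq_add_neg, abs_neg] using this
  linarith

lemma habs4 (a b c d : ℝ) : |a - b - c - d| ≤ |a| + |b| + |c| + |d| := by
  have h1 : |a - b - c - d| ≤ |a - b - c| + |d| := by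
    have := abs_add_le (a - b - c) (-d)
    simpa [sub_eq_add_neg, abs_neg] using this
  linarith [habs3 a b c]

end Helpers

set_option maxHeartbeats 1000000 in
/-- J1-continuity of the solution map `Θ ↦ Y^Θ`: if the càdlàg strategies
`Θₙ` converge to `Θ` in the Skorokhod J1 topology, then the impact processes
`Y^{Θₙ}` converge to `Y^Θ` in the Skorokhod J1 topology. -/
theorem impact_process_J1_continuity
    (T : ℝ) (hT : 0 < T) (h α : ℝ → ℝ) (L K : NNReal)
    (hh : LipschitzWith L h) (hα : LipschitzOnWith K α (Set.Icc 0 T))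
    (y₀ : ℝ) (Θn : ℕ → ℝ → ℝ) (Θ : ℝ → ℝ) (Yn : ℕ → ℝ → ℝ) (Y : ℝ → ℝ)
    (hΘn : ∀ n, Cadlag T (Θn n)) (hΘ : Cadlag T Θ)
    (hconv : TendstoJ1 T Θn Θ)
    (hYn : ∀ n, ImpactSol T h α y₀ (Θn n) (Yn n))
    (hY : ImpactSol T h α y₀ Θ Y) :
    TendstoJ1 T Yn Y := by
  classical
  obtain ⟨lam, hlamP, hlamC⟩ := hconv
  refine ⟨lam, hlamP, ?_⟩
  have hT0 : (0:ℝ) ≤ T := hT.le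
  have h0mem : (0:ℝ) ∈ Icc (0:ℝ) T := ⟨le_rfl, hT0⟩
  -- the clamp map
  set c : ℝ → ℝ := fun s => max 0 (min s T) with hcdef
  have hcmem : ∀ s, c s ∈ Icc (0:ℝ) T := fun s =>
    ⟨le_max_left _ _, max_le hT0 (min_le_right _ _)⟩
  have hcid : ∀ s ∈ Icc (0:ℝ) T, c s = s := by
    intro s hs
    rw [hcdef]
    simp only [min_eq_left hs.2, max_eq_right hs.1]
  have hccont : Continuous c := continuous_const.max (continuous_id.min continuous_const)
  have hcmono : Monotone c := fun s u hsu => max_le_max le_rfl (min_le_min hsu le_rfl)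
  -- alpha bounds
  set A : ℝ := |α 0| + (K:ℝ) * T with hAdef
  have hK0 : (0:ℝ) ≤ (K:ℝ) := K.2
  have hL0 : (0:ℝ) ≤ (L:ℝ) := L.2
  have hαb : ∀ s ∈ Icc (0:ℝ) T, |α s| ≤ A := by
    intro s hs
    have hd := hα.dist_le_mul s hs 0 h0mem
    rw [Real.dist_eq, Real.dist_eq, sub_zero] at hd
    have h1 : |α s| - |α 0| ≤ |α s - α 0| := abs_sub_abs_le_abs_sub _ _
    have h2 : |s| ≤ T := by rw [abs_of_nonneg hs.1]; exact hs.2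
    have h3 : (K:ℝ) * |s| ≤ (K:ℝ) * T := mul_le_mul_of_nonneg_left h2 hK0
    rw [hAdef]; linarith
  have hA0 : 0 ≤ A := le_trans (abs_nonneg (α 0)) (by rw [hAdef]; nlinarith)
  have hαccont : Continuous (fun s => α (c s)) :=
    hα.continuousOn.comp_continuous hccont hcmem
  have hαcb : ∀ s, |α (c s)| ≤ A := fun s => hαb _ (hcmem s)
  -- h linear growth
  have hhb : ∀ v : ℝ, |h v| ≤ |h 0| + (L:ℝ) * |v| := by
    intro v
    have hd := hh.dist_le_mul v 0
    rw [Real.dist_eq, Real.dist_eq, sub_zero] at hd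
    have := abs_sub_abs_le_abs_sub (h v) (h 0)
    linarith
  have hhdiff : ∀ v w : ℝ, |h v - h w| ≤ (L:ℝ) * |v - w| := by
    intro v w
    have hd := hh.dist_le_mul v w
    rwa [Real.dist_eq, Real.dist_eq] at hd
  -- measurable clamped versions
  have hΘcm : Measurable (fun s => Θ (c s)) := cadlag_meas hT0 hΘ
  have hYcm : Measurable (fun s => Y (c s)) := cadlag_meas hT0 hY.1
  have hΘncm : ∀ n, Measurable (fun s => Θn n (c s)) := fun n => cadlag_meas hT0 (hΘn n)
  have hYncm : ∀ n, Measurable (fun s => Yn n (c s)) := fun n => cadlag_meas hT0 (hYn n).1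
  -- bounds
  obtain ⟨BΘ, hBΘ0, hBΘ⟩ := cadlag_bdd hT0 hΘ
  obtain ⟨BY, hBY0, hBY⟩ := cadlag_bdd hT0 hY.1
  -- solution equations with clamped integrands
  have hEq : ∀ (θ Z : ℝ → ℝ), ImpactSol T h α y₀ θ Z → ∀ t ∈ Icc (0:ℝ) T,
      Z t = y₀ + (θ t - θ 0) - ∫ s in (0:ℝ)..t, h (Z (c s)) * α (c s) := by
    intro θ Z hZ t ht
    rw [hZ.2 t ht]
    have : (∫ s in (0:ℝ)..t, h (Z s) * α s)
        = ∫ s in (0:ℝ)..t, h (Z (c s)) * α (c s) := by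
      apply intervalIntegral.integral_congr
      intro s hs
      rw [uIcc_of_le ht.1] at hs
      have hsIcc : s ∈ Icc (0:ℝ) T := ⟨hs.1, le_trans hs.2 ht.2⟩
      simp only [hcid s hsIcc]
    rw [this]
  set CC : ℝ := (L:ℝ) * A with hCCdef
  have hCC0 : 0 ≤ CC := mul_nonneg hL0 hA0
  -- uniform bound on Θn for large n
  obtain ⟨N₁, hN₁⟩ := hlamC 1 one_pos
  have hΘnb : ∀ n, N₁ ≤ n → ∀ s ∈ Icc (0:ℝ) T, |Θn n s| ≤ BΘ + 1 := by
    intro n hn s hs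
    have hsurj : s ∈ Icc (lam n 0) (lam n T) := by
      rw [(hlamP n).2.2.1, (hlamP n).2.2.2.1]; exact hs
    obtain ⟨t, ht, hts⟩ := intermediate_value_Icc hT0 (hlamP n).1 hsurj
    have h1 := (hN₁ n hn t ht).2
    rw [hts] at h1
    have h2 := hBΘ t ht
    have h3 := abs_sub_abs_le_abs_sub (Θn n s) (Θ t)
    linarith
  -- uniform bound on Yn for large n
  set c₀ : ℝ := |y₀| + 2*(BΘ+1) + |h 0| * A * T with hc₀def
  have hc₀0 : 0 ≤ c₀ := by
    rw [hc₀def]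
    have h1 : 0 ≤ |h 0| * A * T := mul_nonneg (mul_nonneg (abs_nonneg _) hA0) hT0
    linarith [abs_nonneg y₀, hBΘ0]
  set BY1 : ℝ := c₀ + CC * ((T * c₀) * Real.exp (CC * T)) with hBY1def
  have hBY10 : 0 ≤ BY1 := by
    rw [hBY1def]
    have h1 : 0 ≤ CC * ((T * c₀) * Real.exp (CC * T)) :=
      mul_nonneg hCC0 (mul_nonneg (mul_nonneg hT0 hc₀0) (Real.exp_nonneg _))
    linarith
  have hYnb : ∀ n, N₁ ≤ n → ∀ t ∈ Icc (0:ℝ) T, |Yn n t| ≤ BY1 := by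
    intro n hn
    obtain ⟨Bn, hBn0, hBn⟩ := cadlag_bdd hT0 (hYn n).1
    set g : ℝ → ℝ := fun s => |Yn n (c s)| with hgdef
    have hgm : Measurable g := (hYncm n).abs
    have hgb : ∀ s, g s ≤ Bn := fun s => hBn _ (hcmem s)
    have hg0 : ∀ s, 0 ≤ g s := fun s => abs_nonneg _
    have hgabs : ∀ s, |g s| ≤ Bn := fun s => by
      rw [abs_of_nonneg (hg0 s)]; exact hgb s
    -- integrand facts
    set Fn : ℝ → ℝ := fun s => h (Yn n (c s)) * α (c s) with hFndef
    have hFnm : Measurable Fn := (hh.continuous.measurable.comp (hYncm n)).mul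
      hαccont.measurable
    have hFnb : ∀ s, |Fn s| ≤ (|h 0| + (L:ℝ) * Bn) * A := by
      intro s
      rw [hFndef]
      simp only
      rw [abs_mul]
      have h1 : |h (Yn n (c s))| ≤ |h 0| + (L:ℝ) * Bn := by
        have := hhb (Yn n (c s))
        have h2 : (L:ℝ) * |Yn n (c s)| ≤ (L:ℝ) * Bn :=
          mul_le_mul_of_nonneg_left (hgb s) hL0
        linarith
      exact mul_le_mul h1 (hαcb s) (abs_nonneg _)
        (le_trans (abs_nonneg _) h1)
    have hFnint : ∀ p q : ℝ, IntervalIntegrable Fn volume p q := bm_intInt hFnm hFnb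
    have hineq : ∀ t ∈ Icc (0:ℝ) T, g t ≤ c₀ + CC * ∫ s in (0:ℝ)..t, g s := by
      intro t ht
      have heqn := hEq (Θn n) (Yn n) (hYn n) t ht
      have hgt : g t = |Yn n t| := by rw [hgdef]; simp only [hcid t ht]
      -- bound the integral term
      have hbint : |∫ s in (0:ℝ)..t, Fn s| ≤ |h 0| * A * T + CC * ∫ s in (0:ℝ)..t, g s := by
        have hb : ∀ u ∈ Icc (0:ℝ) t, |Fn u| ≤ |h 0| * A + CC * g u := by
          intro u hu
          rw [hFndef]
          simp only
          rw [abs_mul]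
          have h1 : |h (Yn n (c u))| ≤ |h 0| + (L:ℝ) * g u := by
            have := hhb (Yn n (c u))
            rw [hgdef]
            simpa using this
          calc |h (Yn n (c u))| * |α (c u)| ≤ (|h 0| + (L:ℝ) * g u) * A :=
                mul_le_mul h1 (hαcb u) (abs_nonneg _)
                  (le_trans (abs_nonneg _) h1)
            _ = |h 0| * A + CC * g u := by rw [hCCdef]; ring
        have hbi : IntervalIntegrable (fun u => |h 0| * A + CC * g u) volume 0 t := by
          refine bm_intInt (measurable_const.add (hgm.const_mul CC)) (M := |h 0| * A + CC * Bn)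
            (fun s => ?_) 0 t
          have h1 : 0 ≤ |h 0| * A + CC * g s :=
            add_nonneg (mul_nonneg (abs_nonneg _) hA0) (mul_nonneg hCC0 (hg0 s))
          show |(|h 0| * A + CC * g s)| ≤ _
          rw [abs_of_nonneg h1]
          have := mul_le_mul_of_nonneg_left (hgb s) hCC0
          linarith
        have h2 := int_abs_le ht.1 (hFnint 0 t) hbi hb
        have h3 : (∫ u in (0:ℝ)..t, (|h 0| * A + CC * g u))
            = |h 0| * A * t + CC * ∫ s in (0:ℝ)..t, g s := by
          rw [intervalIntegral.integral_add (intervalIntegrable_const)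
            ((bm_intInt hgm hgabs 0 t).const_mul CC),
            intervalIntegral.integral_const, intervalIntegral.integral_const_mul]
          simp [smul_eq_mul]
          ring
        rw [h3] at h2
        have h4 : |h 0| * A * t ≤ |h 0| * A * T :=
          mul_le_mul_of_nonneg_left ht.2 (mul_nonneg (abs_nonneg _) hA0)
        linarith
      rw [hgt, heqn]
      have hΘ1 := hΘnb n hn t ht
      have hΘ2 := hΘnb n hn 0 h0mem
      have := habs3 (y₀ + (Θn n t - Θn n 0)) (0:ℝ) (∫ s in (0:ℝ)..t, Fn s)
      have htri : |y₀ + (Θn n t - Θn n 0)| ≤ |y₀| + |Θn n t| + |Θn n 0| := by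
        have h5 := abs_add_le y₀ (Θn n t - Θn n 0)
        have h6 : |Θn n t - Θn n 0| ≤ |Θn n t| + |Θn n 0| := by
          have := abs_add_le (Θn n t) (-(Θn n 0))
          simpa [sub_eq_add_neg, abs_neg] using this
        linarith
      have habs : |y₀ + (Θn n t - Θn n 0) - ∫ s in (0:ℝ)..t, Fn s|
          ≤ |y₀ + (Θn n t - Θn n 0)| + |∫ s in (0:ℝ)..t, Fn s| := by
        have := abs_add_le (y₀ + (Θn n t - Θn n 0)) (-(∫ s in (0:ℝ)..t, Fn s))
        simpa [sub_eq_add_neg, abs_neg] using this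
      rw [hc₀def]
      linarith
    have hgron := gron hT0 hCC0 g (fun _ => c₀) hgm measurable_const hg0 hgb
      (fun _ => hc₀0) ⟨c₀, fun _ => by rw [abs_of_nonneg hc₀0]⟩ hineq
    intro t ht
    have h1 := hineq t ht
    have h2 := hgron t ht
    have h3 : (∫ s in (0:ℝ)..T, (fun _ => c₀) s) = T * c₀ := by
      rw [intervalIntegral.integral_const, sub_zero, smul_eq_mul]
    rw [h3] at h2
    have hgt : g t = |Yn n t| := by rw [hgdef]; simp only [hcid t ht]
    rw [hgt] at h1
    rw [hBY1def]
    have h4 : CC * (∫ s in (0:ℝ)..t, g s) ≤ CC * ((T * c₀) * Real.exp (CC * T)) :=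
      mul_le_mul_of_nonneg_left h2 hCC0
    linarith
  set Mh : ℝ := |h 0| + (L:ℝ) * BY1 with hMhdef
  have hMh0 : 0 ≤ Mh := add_nonneg (abs_nonneg _) (mul_nonneg hL0 hBY10)
  -- the inverse time changes mu
  set mu : ℕ → ℝ → ℝ := fun n s => sSup {t | t ∈ Icc (0:ℝ) T ∧ lam n t ≤ c s} with hmudef
  have hmuP : ∀ n s, mu n s ∈ Icc (0:ℝ) T ∧ lam n (mu n s) = c s := by
    intro n s
    set S : Set ℝ := {t | t ∈ Icc (0:ℝ) T ∧ lam n t ≤ c s} with hSdef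
    have h0S : (0:ℝ) ∈ S := by
      simp only [hSdef, Set.mem_setOf_eq]
      exact ⟨h0mem, by rw [(hlamP n).2.2.1]; exact (hcmem s).1⟩
    have hne : S.Nonempty := ⟨0, h0S⟩
    have hbddS : BddAbove S := ⟨T, fun u hu => hu.1.2⟩
    have hclosed : IsClosed S := by
      have hSeq : S = Icc (0:ℝ) T ∩ (lam n ⁻¹' Iic (c s)) := by
        ext u
        simp only [hSdef, Set.mem_setOf_eq, Set.mem_inter_iff, Set.mem_preimage,
          Set.mem_Iic]
      rw [hSeq]
      exact (hlamP n).1.preimage_isClosed_of_isClosed isClosed_Icc isClosed_Iic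
    have hmem : mu n s ∈ S := hclosed.csSup_mem hne hbddS
    have hIcc : mu n s ∈ Icc (0:ℝ) T := hmem.1
    refine ⟨hIcc, ?_⟩
    have hsub : Icc (mu n s) T ⊆ Icc (0:ℝ) T := Icc_subset_Icc hIcc.1 le_rfl
    have hcs : c s ∈ Icc (lam n (mu n s)) (lam n T) :=
      ⟨hmem.2, by rw [(hlamP n).2.2.2.1]; exact (hcmem s).2⟩
    obtain ⟨t, htmem, hteq⟩ := intermediate_value_Icc hIcc.2 ((hlamP n).1.mono hsub) hcs
    have htS : t ∈ S := by
      simp only [hSdef, Set.mem_setOf_eq]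
      exact ⟨⟨le_trans hIcc.1 htmem.1, htmem.2⟩, le_of_eq hteq⟩
    have h1 : t ≤ mu n s := le_csSup hbddS htS
    have h2 : t = mu n s := le_antisymm h1 htmem.1
    rw [← h2]; exact hteq
  have hmumono : ∀ n, Monotone (mu n) := by
    intro n s u hsu
    rw [hmudef]
    simp only
    refine csSup_le_csSup ⟨T, fun v hv => hv.1.2⟩ ?_ ?_
    · refine ⟨0, ?_⟩
      simp only [Set.mem_setOf_eq]
      exact ⟨h0mem, by rw [(hlamP n).2.2.1]; exact (hcmem s).1⟩
    · intro v hv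
      simp only [Set.mem_setOf_eq] at hv ⊢
      exact ⟨hv.1, le_trans hv.2 (hcmono hsu)⟩
  have hmum : ∀ n, Measurable (mu n) := fun n => (hmumono n).measurable
  have hmuclose : ∀ ε' > (0:ℝ), ∃ N, ∀ n ≥ N, ∀ s, |mu n s - c s| ≤ ε' := by
    intro ε' hε'
    obtain ⟨N, hN⟩ := hlamC ε' hε'
    refine ⟨N, fun n hn s => ?_⟩
    have h1 := (hN n hn (mu n s) (hmuP n s).1).1
    rw [(hmuP n s).2] at h1
    rwa [abs_sub_comm]
  -- the perturbation integrals V n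
  set w : ℕ → ℝ → ℝ := fun n s => |Θ (c (mu n s)) - Θ (c s)| with hwdef
  have hwm : ∀ n, Measurable (w n) := fun n => ((hΘcm.comp (hmum n)).sub hΘcm).abs
  have hwb : ∀ n s, |w n s| ≤ 2 * BΘ := by
    intro n s
    have h1 : |Θ (c (mu n s))| ≤ BΘ := hBΘ _ (hcmem _)
    have h2 : |Θ (c s)| ≤ BΘ := hBΘ _ (hcmem _)
    rw [hwdef]
    simp only [abs_abs]
    have := abs_add_le (Θ (c (mu n s))) (-(Θ (c s)))
    simp only [← sub_eq_add_neg, abs_neg] at this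
    linarith
  have hw0 : ∀ n s, 0 ≤ w n s := fun n s => abs_nonneg _
  set V : ℕ → ℝ := fun n => ∫ s in (0:ℝ)..T, w n s with hVdef
  have hV0le : ∀ n, 0 ≤ V n := fun n =>
    intervalIntegral.integral_nonneg hT0 (fun u _ => hw0 n u)
  have hVtendsto : Tendsto V atTop (𝓝 0) := by
    obtain ⟨D, hDc, hDcont⟩ := cadlag_ctble hΘ
    have hnull : volume (D ∪ {T}) = 0 :=
      ((hDc.union (Set.countable_singleton T)).measure_zero volume)
    have hae0 : ∀ᵐ s ∂volume, s ∉ D ∪ {T} := by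
      rw [ae_iff]
      simp only [not_not]
      exact hnull
    have hae : ∀ᵐ s ∂(volume.restrict (Ioc (0:ℝ) T)),
        Tendsto (fun n => w n s) atTop (𝓝 0) := by
      filter_upwards [ae_restrict_of_ae hae0, ae_restrict_mem measurableSet_Ioc]
        with s hs1 hs2
      have hsT : s ≠ T := fun hcon => hs1 (Or.inr hcon)
      have hsIoo : s ∈ Ioo (0:ℝ) T := ⟨hs2.1, lt_of_le_of_ne hs2.2 hsT⟩
      have hsIcc : s ∈ Icc (0:ℝ) T := ⟨hsIoo.1.le, hsIoo.2.le⟩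
      have hcont := hDcont s hsIoo (fun hd => hs1 (Or.inl hd))
      have hmt : Tendsto (fun n => mu n s) atTop (𝓝 s) := by
        rw [Metric.tendsto_atTop]
        intro ε' hε'
        obtain ⟨N, hN⟩ := hmuclose (ε'/2) (by linarith)
        refine ⟨N, fun n hn => ?_⟩
        have h1 := hN n hn s
        rw [hcid s hsIcc] at h1
        rw [Real.dist_eq]
        linarith
      have hc_mu : ∀ n, c (mu n s) = mu n s := fun n => hcid _ (hmuP n s).1
      have hΘt : Tendsto (fun n => Θ (c (mu n s))) atTop (𝓝 (Θ s)) := by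
        simp only [hc_mu]
        exact hcont.tendsto.comp hmt
      have : Tendsto (fun n => Θ (c (mu n s)) - Θ (c s)) atTop (𝓝 0) := by
        rw [hcid s hsIcc]
        simpa using hΘt.sub (tendsto_const_nhds (x := Θ s))
      have habs := this.abs
      rw [abs_zero] at habs
      exact habs
    have hdct := MeasureTheory.tendsto_integral_of_dominated_convergence
      (μ := volume.restrict (Ioc (0:ℝ) T)) (F := fun n s => w n s) (f := fun _ => (0:ℝ))
      (bound := fun _ => 2 * BΘ)
      (fun n => (hwm n).aestronglyMeasurable.restrict)
      (integrableOn_const (C := 2*BΘ) measure_Ioc_lt_top.ne)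
      (fun n => ae_of_all _ (fun s => by simpa using hwb n s))
      hae
    simp only [integral_zero] at hdct
    have hVeq : V = fun n => ∫ s in Ioc (0:ℝ) T, w n s :=
      funext (fun n => intervalIntegral.integral_of_le hT0)
    rw [hVeq]
    exact hdct
  -- final convergence argument
  intro ε hε
  set Q : ℝ := CC * Real.exp (CC * T) with hQdef
  have hQ0 : 0 ≤ Q := mul_nonneg hCC0 (Real.exp_nonneg _)
  set P : ℝ := 2 + Mh * A + 2 * T * Q with hPdef
  have hP2 : 2 ≤ P := by
    rw [hPdef]
    have := mul_nonneg hMh0 hA0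
    nlinarith
  have hP0 : 0 < P := lt_of_lt_of_le two_pos hP2
  set ε' : ℝ := ε / (2 * P) with hε'def
  have hε'0 : 0 < ε' := div_pos hε (by linarith)
  have hε'P : ε' * P = ε / 2 := by
    rw [hε'def]
    field_simp
  have hε'ε : ε' ≤ ε := by
    rw [hε'def]
    exact div_le_self hε.le (by linarith)
  obtain ⟨N₃, hN₃⟩ := hlamC ε' hε'0
  obtain ⟨N₂, hN₂⟩ : ∃ N₂, ∀ n ≥ N₂, Q * V n ≤ ε / 2 := by
    obtain ⟨N₂, hN₂⟩ := Metric.tendsto_atTop.mp hVtendsto (ε / (2 * (Q + 1)))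
      (div_pos hε (by linarith))
    refine ⟨N₂, fun n hn => ?_⟩
    have h1 := hN₂ n hn
    rw [Real.dist_eq, sub_zero, abs_of_nonneg (hV0le n)] at h1
    have h2 : Q * V n ≤ Q * (ε / (2 * (Q + 1))) :=
      mul_le_mul_of_nonneg_left h1.le hQ0
    have h3 : Q * (ε / (2 * (Q + 1))) ≤ ε / 2 := by
      rw [mul_comm, div_mul_eq_mul_div, div_le_div_iff₀ (by linarith) two_pos]
      nlinarith [mul_nonneg hε.le hQ0]
    linarith
  refine ⟨max N₁ (max N₂ N₃), fun n hn t ht => ?_⟩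
  have hnN₁ : N₁ ≤ n := le_trans (le_max_left _ _) hn
  have hnN₂ : N₂ ≤ n := le_trans (le_trans (le_max_left _ _) (le_max_right _ _)) hn
  have hnN₃ : N₃ ≤ n := le_trans (le_trans (le_max_right _ _) (le_max_right _ _)) hn
  have hmain₃ := hN₃ n hnN₃
  constructor
  · exact le_trans (hmain₃ t ht).1 hε'ε
  -- the integrands
  set Fn : ℝ → ℝ := fun s => h (Yn n (c s)) * α (c s) with hFndef
  set F : ℝ → ℝ := fun s => h (Y (c s)) * α (c s) with hFdef
  have hFnm : Measurable Fn := (hh.continuous.measurable.comp (hYncm n)).mul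
    hαccont.measurable
  have hFm : Measurable F := (hh.continuous.measurable.comp hYcm).mul hαccont.measurable
  have hFnb : ∀ s, |Fn s| ≤ Mh * A := by
    intro s
    rw [hFndef]; simp only
    rw [abs_mul]
    have h1 : |h (Yn n (c s))| ≤ Mh := by
      rw [hMhdef]
      have h2 := hhb (Yn n (c s))
      have h3 : (L:ℝ) * |Yn n (c s)| ≤ (L:ℝ) * BY1 :=
        mul_le_mul_of_nonneg_left (hYnb n hnN₁ _ (hcmem s)) hL0
      linarith
    exact mul_le_mul h1 (hαcb s) (abs_nonneg _) hMh0
  have hFb : ∀ s, |F s| ≤ (|h 0| + (L:ℝ) * BY) * A := by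
    intro s
    rw [hFdef]; simp only
    rw [abs_mul]
    have h1 : |h (Y (c s))| ≤ |h 0| + (L:ℝ) * BY := by
      have h2 := hhb (Y (c s))
      have h3 : (L:ℝ) * |Y (c s)| ≤ (L:ℝ) * BY :=
        mul_le_mul_of_nonneg_left (hBY _ (hcmem s)) hL0
      linarith
    exact mul_le_mul h1 (hαcb s) (abs_nonneg _) (le_trans (abs_nonneg _) h1)
  have hFnint : ∀ p q : ℝ, IntervalIntegrable Fn volume p q := bm_intInt hFnm hFnb
  have hFint : ∀ p q : ℝ, IntervalIntegrable F volume p q := bm_intInt hFm hFb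
  -- the difference function gn and its Gronwall estimate
  set gn : ℝ → ℝ := fun s => |Yn n (c s) - Y (c s)| with hgndef
  have hgnm : Measurable gn := ((hYncm n).sub hYcm).abs
  have hgn0 : ∀ s, 0 ≤ gn s := fun s => abs_nonneg _
  have hgnb : ∀ s, gn s ≤ BY1 + BY := by
    intro s
    rw [hgndef]; simp only
    have h1 := hYnb n hnN₁ _ (hcmem s)
    have h2 := hBY _ (hcmem s)
    have := abs_add_le (Yn n (c s)) (-(Y (c s)))
    simp only [← sub_eq_add_neg, abs_neg] at this
    linarith
  have hgnabs : ∀ s, |gn s| ≤ BY1 + BY := fun s => by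
    rw [abs_of_nonneg (hgn0 s)]; exact hgnb s
  have hgnint : ∀ p q : ℝ, IntervalIntegrable gn volume p q := bm_intInt hgnm hgnabs
  set an : ℝ → ℝ := fun s => |Θn n (c s) - Θ (c s)| + |Θn n 0 - Θ 0| with handef
  have hanm : Measurable an := (((hΘncm n).sub hΘcm).abs).add measurable_const
  have han0 : ∀ s, 0 ≤ an s := fun s => add_nonneg (abs_nonneg _) (abs_nonneg _)
  have hanb : ∀ s, |an s| ≤ (BΘ + 1) + BΘ + |Θn n 0 - Θ 0| := by
    intro s
    rw [abs_of_nonneg (han0 s), handef]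
    simp only
    have h1 := hΘnb n hnN₁ _ (hcmem s)
    have h2 := hBΘ _ (hcmem s)
    have := abs_add_le (Θn n (c s)) (-(Θ (c s)))
    simp only [← sub_eq_add_neg, abs_neg] at this
    linarith
  -- pointwise bound for the difference of the two integrands
  have hFdiff : ∀ u, |Fn u - F u| ≤ CC * gn u := by
    intro u
    rw [hFndef, hFdef, hgndef]
    simp only
    have heq : h (Yn n (c u)) * α (c u) - h (Y (c u)) * α (c u)
        = (h (Yn n (c u)) - h (Y (c u))) * α (c u) := by ring
    rw [heq, abs_mul]
    have h1 := hhdiff (Yn n (c u)) (Y (c u))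
    calc |h (Yn n (c u)) - h (Y (c u))| * |α (c u)|
        ≤ ((L:ℝ) * |Yn n (c u) - Y (c u)|) * A :=
          mul_le_mul h1 (hαcb u) (abs_nonneg _)
            (le_trans (abs_nonneg _) h1)
      _ = CC * |Yn n (c u) - Y (c u)| := by rw [hCCdef]; ring
  have hdiffint : ∀ p q : ℝ, IntervalIntegrable (fun u => Fn u - F u) volume p q :=
    fun p q => (hFnint p q).sub (hFint p q)
  have hCCgnint : ∀ p q : ℝ, IntervalIntegrable (fun u => CC * gn u) volume p q :=
    fun p q => (hgnint p q).const_mul CC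
  -- Gronwall hypothesis for gn
  have hineq : ∀ u ∈ Icc (0:ℝ) T, gn u ≤ an u + CC * ∫ s in (0:ℝ)..u, gn s := by
    intro u hu
    have hgnu : gn u = |Yn n u - Y u| := by rw [hgndef]; simp only [hcid u hu]
    have hanu : an u = |Θn n u - Θ u| + |Θn n 0 - Θ 0| := by
      rw [handef]; simp only [hcid u hu]
    have heqn := hEq (Θn n) (Yn n) (hYn n) u hu
    have heqY := hEq Θ Y hY u hu
    have hsub : (∫ s in (0:ℝ)..u, Fn s) - (∫ s in (0:ℝ)..u, F s)
        = ∫ s in (0:ℝ)..u, (Fn s - F s) :=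
      (intervalIntegral.integral_sub (hFnint 0 u) (hFint 0 u)).symm
    have hkey : Yn n u - Y u = (Θn n u - Θ u) - (Θn n 0 - Θ 0)
        - (∫ s in (0:ℝ)..u, (Fn s - F s)) := by
      rw [heqn, heqY, ← hsub]
      rw [hFndef, hFdef]
      ring
    have hbint : |∫ s in (0:ℝ)..u, (Fn s - F s)| ≤ CC * ∫ s in (0:ℝ)..u, gn s := by
      have h1 := int_abs_le hu.1 (hdiffint 0 u) (hCCgnint 0 u)
        (fun v _ => hFdiff v)
      rwa [intervalIntegral.integral_const_mul] at h1
    rw [hgnu, hkey, hanu]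
    have := habs3 (Θn n u - Θ u) (Θn n 0 - Θ 0) (∫ s in (0:ℝ)..u, (Fn s - F s))
    have habs' : |Θn n u - Θ u - (Θn n 0 - Θ 0) - ∫ s in (0:ℝ)..u, (Fn s - F s)|
        ≤ |Θn n u - Θ u| + |Θn n 0 - Θ 0| + |∫ s in (0:ℝ)..u, (Fn s - F s)| := this
    linarith
  have hgron := gron hT0 hCC0 gn an hgnm hanm hgn0 hgnb han0
    ⟨(BΘ + 1) + BΘ + |Θn n 0 - Θ 0|, hanb⟩ hineq
  -- bound the an-integral
  have hIA : (∫ s in (0:ℝ)..T, an s) ≤ 2 * ε' * T + V n := by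
    have hrhs_int : IntervalIntegrable (fun s => 2 * ε' + w n s) volume 0 T := by
      refine bm_intInt ((measurable_const).add (hwm n)) (M := 2 * ε' + 2 * BΘ)
        (fun s => ?_) 0 T
      have h1 : 0 ≤ 2 * ε' + w n s := add_nonneg (by linarith) (hw0 n s)
      show |(2 * ε' + w n s)| ≤ _
      rw [abs_of_nonneg h1]
      have := hwb n s
      rw [abs_of_nonneg (hw0 n s)] at this
      linarith
    have hmono : (∫ s in (0:ℝ)..T, an s) ≤ ∫ s in (0:ℝ)..T, (2 * ε' + w n s) := by
      refine intervalIntegral.integral_mono_on hT0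
        (bm_intInt hanm hanb 0 T) hrhs_int (fun s hs => ?_)
      rw [handef]; simp only
      -- |Θn n (c s) - Θ (c s)| ≤ ε' + w n s   and  |Θn n 0 - Θ 0| ≤ ε'
      have hm := hmuP n s
      have h1 : |Θn n (c s) - Θ (c s)| ≤ ε' + w n s := by
        have h2 := (hmain₃ (mu n s) hm.1).2
        rw [hm.2] at h2
        have h3 : |Θn n (c s) - Θ (c s)|
            ≤ |Θn n (c s) - Θ (mu n s)| + |Θ (mu n s) - Θ (c s)| := by
          have := abs_add_le (Θn n (c s) - Θ (mu n s)) (Θ (mu n s) - Θ (c s))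
          simpa using this
        have h4 : w n s = |Θ (mu n s) - Θ (c s)| := by
          rw [hwdef]; simp only [hcid _ hm.1]
        rw [h4]
        linarith
      have h5 : |Θn n 0 - Θ 0| ≤ ε' := by
        have h6 := (hmain₃ 0 h0mem).2
        rwa [(hlamP n).2.2.1] at h6
      linarith
    have heval : (∫ s in (0:ℝ)..T, (2 * ε' + w n s)) = 2 * ε' * T + V n := by
      rw [intervalIntegral.integral_add intervalIntegrable_const
        (bm_intInt (hwm n) (hwb n) 0 T),
        intervalIntegral.integral_const]
      rw [hVdef]
      simp [smul_eq_mul]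
      ring
    linarith
  -- final estimate
  have hlt : lam n t ∈ Icc (0:ℝ) T := (hlamP n).2.2.2.2 ht
  have heqn := hEq (Θn n) (Yn n) (hYn n) (lam n t) hlt
  have heqY := hEq Θ Y hY t ht
  have h3 : (∫ s in (0:ℝ)..(lam n t), Fn s)
      = (∫ s in (0:ℝ)..t, Fn s) + ∫ s in t..(lam n t), Fn s :=
    (intervalIntegral.integral_add_adjacent_intervals (hFnint 0 t)
      (hFnint t (lam n t))).symm
  have h4 : (∫ s in (0:ℝ)..t, Fn s) - (∫ s in (0:ℝ)..t, F s)
      = ∫ s in (0:ℝ)..t, (Fn s - F s) :=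
    (intervalIntegral.integral_sub (hFnint 0 t) (hFint 0 t)).symm
  have hkey : Yn n (lam n t) - Y t = (Θn n (lam n t) - Θ t) - (Θn n 0 - Θ 0)
      - (∫ s in t..(lam n t), Fn s) - (∫ s in (0:ℝ)..t, (Fn s - F s)) := by
    rw [heqn, heqY, h3, ← h4]
    rw [hFndef, hFdef]
    ring
  have hD1 : |Θn n (lam n t) - Θ t| ≤ ε' := (hmain₃ t ht).2
  have hD2 : |Θn n 0 - Θ 0| ≤ ε' := by
    have h6 := (hmain₃ 0 h0mem).2
    rwa [(hlamP n).2.2.1] at h6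
  have hD3 : |∫ s in t..(lam n t), Fn s| ≤ Mh * A * ε' := by
    have h1 := intervalIntegral.norm_integral_le_of_norm_le_const
      (C := Mh * A) (f := Fn) (a := t) (b := lam n t)
      (fun u _ => by simpa using hFnb u)
    rw [Real.norm_eq_abs] at h1
    have h2 : |lam n t - t| ≤ ε' := (hmain₃ t ht).1
    have h3 := mul_le_mul_of_nonneg_left h2 (mul_nonneg hMh0 hA0)
    exact le_trans h1 h3
  have hD4 : |∫ s in (0:ℝ)..t, (Fn s - F s)| ≤ CC * ((2 * ε' * T + V n) * Real.exp (CC * T)) := by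
    have h1 := int_abs_le ht.1 (hdiffint 0 t) (hCCgnint 0 t) (fun v _ => hFdiff v)
    rw [intervalIntegral.integral_const_mul] at h1
    have h2 := hgron t ht
    have h5 : (∫ s in (0:ℝ)..T, an s) * Real.exp (CC * T)
        ≤ (2 * ε' * T + V n) * Real.exp (CC * T) :=
      mul_le_mul_of_nonneg_right hIA (Real.exp_nonneg _)
    have h6 : CC * (∫ s in (0:ℝ)..t, gn s) ≤ CC * ((2 * ε' * T + V n) * Real.exp (CC * T)) :=
      mul_le_mul_of_nonneg_left (le_trans h2 h5) hCC0
    linarith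
  have htotal : |Yn n (lam n t) - Y t| ≤ ε' * P + Q * V n := by
    rw [hkey]
    have habs := habs4 (Θn n (lam n t) - Θ t) (Θn n 0 - Θ 0)
      (∫ s in t..(lam n t), Fn s) (∫ s in (0:ℝ)..t, (Fn s - F s))
    have hexp : CC * ((2 * ε' * T + V n) * Real.exp (CC * T))
        = 2 * T * Q * ε' + Q * V n := by
      rw [hQdef]; ring
    rw [hexp] at hD4
    have hPexp : ε' * P = 2 * ε' + Mh * A * ε' + 2 * T * Q * ε' := by
      rw [hPdef]; ring
    rw [hPexp]
    linarith
  have hQV := hN₂ n hnN₂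
  calc |Yn n (lam n t) - Y t| ≤ ε' * P + Q * V n := htotal
    _ ≤ ε / 2 + ε / 2 := by rw [hε'P]; linarith
    _ = ε := by ring
end
end
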